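/- Under the hypotheses of the previous construction (H satisfying the stated sign conditions), there exists ξ > 0 and α > 0 such that P̃ = P + ξH is positive definite and A(μ)ᵀP̃ + P̃A(μ) ≤ -αI for all μ ∈ [-(0.5-ε), 0.5-ε]. Consequently, the origin of ẋ = A(μ(t))x is globally uniformly exponentially stable over all measurable duty-cycle signals μ(t) taking values in [-(0.5-ε), 0.5-ε]. -/

import Mathlib

open Matrix

set_option maxHeartbeats 4000000

lemma gues_aux (Pm : Matrix (Fin 4) (Fin 4) ℝ) (A : ℝ → Matrix (Fin 4) (Fin 4) ℝ)
    (s : Set ℝ) (c1 c2 α : ℝ) (hc1 : 0 < c1) (hc2 : 0 < c2) (hα : 0 < α)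
    (hlow : ∀ v : Fin 4 → ℝ, c1 * (v ⬝ᵥ v) ≤ v ⬝ᵥ (Pm *ᵥ v))
    (hhigh : ∀ v : Fin 4 → ℝ, v ⬝ᵥ (Pm *ᵥ v) ≤ c2 * (v ⬝ᵥ v))
    (hquad : ∀ μ ∈ s, ∀ v : Fin 4 → ℝ,
      (A μ *ᵥ v) ⬝ᵥ (Pm *ᵥ v) + v ⬝ᵥ (Pm *ᵥ (A μ *ᵥ v)) ≤ -α * (v ⬝ᵥ v)) :
    ∃ K > (0:ℝ), ∃ lam > (0:ℝ),
      ∀ μ : ℝ → ℝ, Measurable μ → (∀ t, μ t ∈ s) →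
        ∀ x : ℝ → Fin 4 → ℝ,
          (∀ t, HasDerivAt x (A (μ t) *ᵥ x t) t) →
          ∀ t ≥ (0:ℝ), ‖x t‖ ≤ K * Real.exp (-lam * t) * ‖x 0‖ := by
  refine ⟨2 * Real.sqrt (c2 / c1), by positivity, α / c2 / 2, by positivity, ?_⟩
  intro μ hμm hμs x hx t ht
  set lam := α / c2 / 2 with hlam
  have hxi : ∀ t i, HasDerivAt (fun s => x s i) ((A (μ t) *ᵥ x t) i) t :=
    fun t i => hasDerivAt_pi.mp (hx t) i
  set x' : ℝ → Fin 4 → ℝ := fun t => A (μ t) *ᵥ x t with hx'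
  set V : ℝ → ℝ := fun t => (x t) ⬝ᵥ (Pm *ᵥ x t) with hV
  have hw : ∀ t i, HasDerivAt (fun s => (Pm *ᵥ x s) i) ((Pm *ᵥ x' t) i) t := by
    intro t i
    simp only [Matrix.mulVec, dotProduct]
    exact HasDerivAt.fun_sum (fun j _ => (hxi t j).const_mul (Pm i j))
  have hVd : ∀ t, HasDerivAt V ((x' t) ⬝ᵥ (Pm *ᵥ x t) + (x t) ⬝ᵥ (Pm *ᵥ x' t)) t := by
    intro t
    have h := HasDerivAt.fun_sum (u := Finset.univ)
      (fun i _ => ((hxi t i).mul (hw t i)))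
    simp only [dotProduct] at h ⊢
    refine h.congr_deriv ?_
    rw [Finset.sum_add_distrib]
  have hdotnn : ∀ v : Fin 4 → ℝ, 0 ≤ v ⬝ᵥ v := by
    intro v
    exact Finset.sum_nonneg (fun i _ => mul_self_nonneg _)
  have hVle : ∀ t, (x' t) ⬝ᵥ (Pm *ᵥ x t) + (x t) ⬝ᵥ (Pm *ᵥ x' t) ≤ -(2*lam) * V t := by
    intro t
    have h1 := hquad (μ t) (hμs t) (x t)
    have h2 := hhigh (x t)
    have h3 := hdotnn (x t)
    have heq : -(2*lam) * V t = -(α/c2) * V t := by rw [hlam]; ring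
    rw [heq]
    calc (x' t) ⬝ᵥ (Pm *ᵥ x t) + (x t) ⬝ᵥ (Pm *ᵥ x' t) ≤ -α * ((x t) ⬝ᵥ (x t)) := h1
    _ ≤ -(α/c2) * V t := by
        have h4 := mul_le_mul_of_nonneg_left h2 hα.le
        rw [neg_mul, neg_mul, neg_le_neg_iff, div_mul_eq_mul_div, div_le_iff₀ hc2]
        nlinarith [h4]
  set g : ℝ → ℝ := fun t => V t * Real.exp (2*lam*t) with hg
  have hgd : ∀ t, HasDerivAt g
      (((x' t) ⬝ᵥ (Pm *ᵥ x t) + (x t) ⬝ᵥ (Pm *ᵥ x' t)) * Real.exp (2*lam*t)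
        + V t * (Real.exp (2*lam*t) * (2*lam))) t := by
    intro t
    have hlin : HasDerivAt (fun s : ℝ => 2*lam*s) (2*lam) t := by
      simpa using (hasDerivAt_id t).const_mul (2*lam)
    exact (hVd t).mul hlin.exp
  have hganti : Antitone g := by
    apply antitone_of_deriv_nonpos
    · intro t; exact (hgd t).differentiableAt
    · intro t
      rw [(hgd t).deriv]
      have := hVle t
      have hexp : (0:ℝ) < Real.exp (2*lam*t) := Real.exp_pos _
      nlinarith [mul_le_mul_of_nonneg_right this hexp.le]
  have hVt : V t ≤ V 0 * Real.exp (-(2*lam)*t) := by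
    have h5 := hganti ht
    simp only [hg] at h5
    rw [mul_zero, Real.exp_zero, mul_one] at h5
    calc V t = V t * Real.exp (2*lam*t) * Real.exp (-(2*lam)*t) := by
          rw [mul_assoc, ← Real.exp_add]; simp
    _ ≤ V 0 * Real.exp (-(2*lam)*t) :=
        mul_le_mul_of_nonneg_right h5 (Real.exp_pos _).le
  have hnorm_sq : ∀ v : Fin 4 → ℝ, ‖v‖^2 ≤ v ⬝ᵥ v := by
    intro v
    have h3 := hdotnn v
    have hv : ‖v‖ ≤ Real.sqrt (v ⬝ᵥ v) := by
      rw [pi_norm_le_iff_of_nonneg (Real.sqrt_nonneg _)]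
      intro i
      have h4 : v i * v i ≤ v ⬝ᵥ v := by
        simpa [dotProduct] using
          Finset.single_le_sum (f := fun j => v j * v j)
            (fun j _ => mul_self_nonneg (v j)) (Finset.mem_univ i)
      calc ‖v i‖ = Real.sqrt (v i * v i) := by
            rw [Real.sqrt_mul_self_eq_abs, Real.norm_eq_abs]
      _ ≤ Real.sqrt (v ⬝ᵥ v) := Real.sqrt_le_sqrt h4
    calc ‖v‖^2 ≤ Real.sqrt (v ⬝ᵥ v)^2 := pow_le_pow_left₀ (norm_nonneg _) hv 2
    _ = v ⬝ᵥ v := Real.sq_sqrt h3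
  have hsq_norm : ∀ v : Fin 4 → ℝ, v ⬝ᵥ v ≤ 4 * ‖v‖^2 := by
    intro v
    simp only [dotProduct, Fin.sum_univ_four]
    have h6 : ∀ i, v i * v i ≤ ‖v‖^2 := by
      intro i
      have h := norm_le_pi_norm v i
      have h7 : v i * v i = ‖v i‖^2 := by rw [Real.norm_eq_abs, sq_abs]; ring
      rw [h7]
      exact pow_le_pow_left₀ (norm_nonneg _) h 2
    linarith [h6 0, h6 1, h6 2, h6 3]
  have key : c1 * ‖x t‖^2 ≤ 4 * c2 * ‖x 0‖^2 * Real.exp (-(2*lam)*t) := by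
    have e1 : c1 * ‖x t‖^2 ≤ V t :=
      le_trans (mul_le_mul_of_nonneg_left (hnorm_sq (x t)) hc1.le) (hlow (x t))
    have e2 : V 0 ≤ 4 * c2 * ‖x 0‖^2 := by
      calc V 0 ≤ c2 * ((x 0) ⬝ᵥ (x 0)) := hhigh (x 0)
      _ ≤ c2 * (4 * ‖x 0‖^2) := mul_le_mul_of_nonneg_left (hsq_norm (x 0)) hc2.le
      _ = 4 * c2 * ‖x 0‖^2 := by ring
    calc c1 * ‖x t‖^2 ≤ V t := e1
    _ ≤ V 0 * Real.exp (-(2*lam)*t) := hVt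
    _ ≤ 4 * c2 * ‖x 0‖^2 * Real.exp (-(2*lam)*t) :=
        mul_le_mul_of_nonneg_right e2 (Real.exp_pos _).le
  have hfin : ‖x t‖^2 ≤ (2 * Real.sqrt (c2/c1) * Real.exp (-lam*t) * ‖x 0‖)^2 := by
    have hs : Real.sqrt (c2/c1)^2 = c2/c1 := Real.sq_sqrt (by positivity)
    have he : Real.exp (-lam*t)^2 = Real.exp (-(2*lam)*t) := by
      rw [sq, ← Real.exp_add]; congr 1; ring
    have heq : (2 * Real.sqrt (c2/c1) * Real.exp (-lam*t) * ‖x 0‖)^2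
        = (4 * c2 * ‖x 0‖^2 * Real.exp (-(2*lam)*t)) / c1 := by
      rw [mul_pow, mul_pow, mul_pow, hs, he]; field_simp; ring
    rw [heq, le_div_iff₀ hc1]
    nlinarith [key]
  calc ‖x t‖ = Real.sqrt (‖x t‖^2) := (Real.sqrt_sq (norm_nonneg _)).symm
  _ ≤ Real.sqrt ((2 * Real.sqrt (c2/c1) * Real.exp (-lam*t) * ‖x 0‖)^2) :=
      Real.sqrt_le_sqrt hfin
  _ = 2 * Real.sqrt (c2/c1) * Real.exp (-lam*t) * ‖x 0‖ := Real.sqrt_sq (by positivity)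

lemma cross_bound (β c x y : ℝ) (hβ : 0 < β) :
    2*c*x*y ≤ (β/2)*x^2 + (2/β)*c^2*y^2 := by
  have h1 : (β/2)*x^2 + (2/β)*c^2*y^2 - 2*c*x*y = (β*x - 2*c*y)^2/(2*β) := by
    field_simp; ring
  nlinarith [div_nonneg (sq_nonneg (β*x - 2*c*y)) (by positivity : (0:ℝ) ≤ 2*β)]

lemma abs_cross (h x y : ℝ) :
    -(|h| * (x^2+y^2)) ≤ 2*h*x*y ∧ 2*h*x*y ≤ |h| * (x^2+y^2) := by
  rcases abs_cases h with ⟨he,_⟩|⟨he,_⟩ <;> constructor <;>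
    nlinarith [sq_nonneg (x+y), sq_nonneg (x-y)]

lemma core_scalar (ε a13 a23 b24 c13 d23 e14 f24 g14 r ξ α μ v0 v1 v2 v3
    β1 M1 M2 d0 β2 β3 β M34 W q11 q12 q22 q33 q34 p14 p24 q44 : ℝ)
    (hε : 0 < ε) (hε2 : ε ≤ 1/2)
    (ha13 : 0 < a13) (ha23 : 0 < a23) (hb24 : 0 < b24)
    (hc13 : 0 < c13) (hd23 : 0 < d23) (hf24 : 0 < f24) (hr : 0 < r)
    (hcd : (1-ε)*c13 < ε*d23)
    (hdet0 : (a13-a23)^2*(1/2-ε)^2 + a13*a23 < 4*a13*ε*b24)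
    (hμ1 : ε - 1/2 ≤ μ) (hμ2 : μ ≤ 1/2 - ε)
    (hβ1 : β1 = 2*a13*ε) (hM1 : M1 = 2*a13*(1-ε)) (hM2 : M2 = 2*a23*(1-ε)+2*b24)
    (hd0 : d0 = 4*a13*ε*b24 - a13*a23 - (a13-a23)^2*(1/2-ε)^2)
    (hβ2 : β2 = min (β1/2) (d0/(2*(M1+M2))))
    (hβ3 : β3 = 2*(d23*ε - c13*(1-ε)))
    (hβd : β = min β2 β3)
    (hM34 : M34 = d23 + |e14| + f24)
    (hW : W = (2/β)*((g14*r)^2 + (b24*r)^2 + M34^2))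
    (hξ : 0 < ξ) (hξΓ : ξ*(W + 2*f24) ≤ r/2)
    (hα : 0 < α) (hαβ : α ≤ ξ*β/2) (hαr : α ≤ r/2)
    (hq11d : q11 = -2*a13*(1/2-μ))
    (hq12d : q12 = (a13+a23)*μ)
    (hq22d : q22 = 2*a23*(1/2+μ) - 2*b24)
    (hq33d : q33 = 2*(c13*(1/2-μ) - d23*(1/2+μ)))
    (hq34d : q34 = -d23 - e14*(1/2-μ) + f24*(1/2+μ))
    (hp14d : p14 = -(g14*r))
    (hp24d : p24 = -(b24*r))
    (hq44d : q44 = 2*f24) :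
    ξ*( q11*v0^2 + 2*q12*v0*v1 + q22*v1^2
      + q33*v2^2 + 2*p14*v0*v3 + 2*p24*v1*v3
      + 2*q34*v2*v3 + q44*v3^2 )
      + α*(v0^2+v1^2+v2^2+v3^2) ≤ r*v3^2 := by
  subst hp14d hp24d hq44d
  have hβ1pos : 0 < β1 := by rw [hβ1]; positivity
  have hM1pos : 0 < M1 := by rw [hM1]; nlinarith only [ha13, hε, hε2]
  have hM2pos : 0 < M2 := by rw [hM2]; nlinarith only [ha23, hb24, hε, hε2]
  have hd0pos : 0 < d0 := by rw [hd0]; nlinarith only [hdet0]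
  have hβ2pos : 0 < β2 := by rw [hβ2]; exact lt_min (by positivity) (by positivity)
  have hβ3pos : 0 < β3 := by rw [hβ3]; nlinarith only [hcd]
  have hβpos : 0 < β := by rw [hβd]; exact lt_min hβ2pos hβ3pos
  have hβle2 : β ≤ β2 := by rw [hβd]; exact min_le_left _ _
  have hβle3 : β ≤ β3 := by rw [hβd]; exact min_le_right _ _
  have hq11 : q11 ≤ -β1 := by
    rw [hq11d, hβ1]
    nlinarith only [mul_nonneg ha13.le (by linarith only [hμ2] : (0:ℝ) ≤ 1/2 - μ - ε)]
  have hq11M : -M1 ≤ q11 := by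
    rw [hq11d, hM1]
    nlinarith only [mul_nonneg ha13.le (by linarith only [hμ1] : (0:ℝ) ≤ (1-ε) - (1/2-μ))]
  have hq22ub : q22 ≤ M2 := by
    rw [hq22d, hM2]
    nlinarith only [hb24, mul_nonneg ha23.le (by linarith only [hμ2] : (0:ℝ) ≤ (1-ε) - (1/2+μ))]
  have hq22lb : -M2 ≤ q22 := by
    rw [hq22d, hM2]
    nlinarith only [mul_nonneg ha23.le (by linarith only [hμ1] : (0:ℝ) ≤ (1/2+μ) + (1-ε)), hb24]
  have hμsq : μ^2 ≤ (1/2-ε)^2 := by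
    nlinarith only [mul_nonneg (by linarith only [hμ2] : (0:ℝ) ≤ 1/2-ε-μ)
      (by linarith only [hμ1] : (0:ℝ) ≤ 1/2-ε+μ)]
  have hdet : d0 ≤ q11*q22 - q12^2 := by
    rw [hq11d, hq22d, hq12d, hd0]
    nlinarith only [mul_nonneg (mul_nonneg (mul_nonneg (by norm_num : (0:ℝ) ≤ 4) ha13.le) hb24.le)
        (by linarith only [hμ2] : (0:ℝ) ≤ (1/2-μ) - ε),
      mul_nonneg (sq_nonneg (a13-a23)) (by linarith only [hμsq] : (0:ℝ) ≤ (1/2-ε)^2 - μ^2)]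
  have hβ2le1 : β2 ≤ β1/2 := by rw [hβ2]; exact min_le_left _ _
  have hβ2le2 : β2*(2*(M1+M2)) ≤ d0 := by
    have h : β2 ≤ d0/(2*(M1+M2)) := by rw [hβ2]; exact min_le_right _ _
    calc β2*(2*(M1+M2)) ≤ (d0/(2*(M1+M2)))*(2*(M1+M2)) :=
          mul_le_mul_of_nonneg_right h (by positivity)
    _ = d0 := by field_simp
  have hshift : d0/2 ≤ (q11+β2)*(q22+β2) - q12^2 := by
    have h1 : -(M1+M2) ≤ q11 + q22 := by linarith
    have h2 : β2*(-(M1+M2)) ≤ β2*(q11+q22) := mul_le_mul_of_nonneg_left h1 hβ2pos.le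
    nlinarith only [h2, hβ2le2, hdet, sq_nonneg β2]
  have hq11β : q11 + β2 ≤ -(β1/2) := by linarith
  have h2x2 : q11*v0^2 + 2*q12*v0*v1 + q22*v1^2 ≤ -β2*(v0^2+v1^2) := by
    have hA : q11 + β2 < 0 := by linarith
    have hgoal : (q11+β2)*v0^2 + 2*q12*v0*v1 + (q22+β2)*v1^2 ≤ 0 := by
      have h1 := sq_nonneg ((q11+β2)*v0 + q12*v1)
      have h2 : 0 ≤ ((q11+β2)*(q22+β2) - q12^2) * v1^2 :=
        mul_nonneg (by linarith) (sq_nonneg v1)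
      have h3 : (q11+β2) * ((q11+β2)*v0^2 + 2*q12*v0*v1 + (q22+β2)*v1^2)
          = ((q11+β2)*v0 + q12*v1)^2 + ((q11+β2)*(q22+β2) - q12^2)*v1^2 := by ring
      nlinarith only [h1, h2, h3, hA]
    linarith only [hgoal]
  have hq33 : q33 ≤ -β3 := by
    rw [hq33d, hβ3]
    nlinarith only [mul_nonneg (by linarith only [hc13, hd23] : (0:ℝ) ≤ c13 + d23)
      (by linarith only [hμ1] : (0:ℝ) ≤ 1/2 + μ - ε)]
  have he14 := abs_nonneg e14
  have he14l := neg_abs_le e14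
  have he14u := le_abs_self e14
  have hmu0 : (0:ℝ) ≤ 1/2 - μ := by linarith only [hμ2, hε]
  have hmu1 : 1/2 - μ ≤ 1 := by linarith only [hμ1, hε]
  have hmu0' : (0:ℝ) ≤ 1/2 + μ := by linarith only [hμ1, hε]
  have hmu1' : 1/2 + μ ≤ 1 := by linarith only [hμ2, hε]
  have hBa : |e14| * (1/2-μ) ≤ |e14| * 1 := mul_le_mul_of_nonneg_left hmu1 (abs_nonneg e14)
  have hq34u : q34 ≤ M34 := by
    rw [hq34d, hM34]
    have hAa : (-e14)*(1/2-μ) ≤ |e14| * (1/2-μ) :=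
      mul_le_mul_of_nonneg_right (neg_le_abs e14) hmu0
    have hCa : f24*(1/2+μ) ≤ f24*1 := mul_le_mul_of_nonneg_left hmu1' hf24.le
    nlinarith only [hAa, hBa, hCa, hd23]
  have hq34l : -M34 ≤ q34 := by
    rw [hq34d, hM34]
    have hAa : e14*(1/2-μ) ≤ |e14| * (1/2-μ) :=
      mul_le_mul_of_nonneg_right (le_abs_self e14) hmu0
    have hCa : 0 ≤ f24*(1/2+μ) := mul_nonneg hf24.le hmu0'
    nlinarith only [hAa, hBa, hCa, hd23, hf24]
  have hM34pos : 0 < M34 := by rw [hM34]; positivity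
  have hq34sq : q34^2 ≤ M34^2 := by nlinarith only [hq34u, hq34l, hM34pos]
  have hc1 := cross_bound β (-(g14*r)) v0 v3 hβpos
  have hc2 := cross_bound β (-(b24*r)) v1 v3 hβpos
  have hc3 := cross_bound β q34 v2 v3 hβpos
  have hc3' : 2*q34*v2*v3 ≤ (β/2)*v2^2 + (2/β)*M34^2*v3^2 := by
    have h5 : (2/β)*q34^2*v3^2 ≤ (2/β)*M34^2*v3^2 := by
      apply mul_le_mul_of_nonneg_right _ (sq_nonneg v3)
      exact mul_le_mul_of_nonneg_left hq34sq (by positivity)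
    linarith
  have hq33v : q33*v2^2 ≤ -β*v2^2 :=
    mul_le_mul_of_nonneg_right (by linarith) (sq_nonneg v2)
  have h2x2' : q11*v0^2 + 2*q12*v0*v1 + q22*v1^2 ≤ -β*(v0^2+v1^2) := by
    have h6 : -β2*(v0^2+v1^2) ≤ -β*(v0^2+v1^2) :=
      mul_le_mul_of_nonneg_right (by linarith) (by positivity)
    linarith
  have hcross : 2*(-(g14*r))*v0*v3 + 2*(-(b24*r))*v1*v3 + 2*q34*v2*v3
      ≤ (β/2)*(v0^2+v1^2+v2^2) + W*v3^2 := by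
    have e1 : (-(g14*r))^2 = (g14*r)^2 := by ring
    have e2 : (-(b24*r))^2 = (b24*r)^2 := by ring
    rw [e1] at hc1; rw [e2] at hc2
    rw [hW]
    nlinarith only [hc1, hc2, hc3']
  have hsum : q11*v0^2 + 2*q12*v0*v1 + q22*v1^2
      + q33*v2^2 + 2*(-(g14*r))*v0*v3 + 2*(-(b24*r))*v1*v3
      + 2*q34*v2*v3 + (2*f24)*v3^2
      ≤ -(β/2)*(v0^2+v1^2+v2^2) + (W + 2*f24)*v3^2 := by
    linarith only [h2x2', hq33v, hcross]
  have hξsum := mul_le_mul_of_nonneg_left hsum hξ.le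
  have t0 : 0 ≤ (ξ*β/2 - α)*v0^2 := mul_nonneg (by linarith) (sq_nonneg v0)
  have t1 : 0 ≤ (ξ*β/2 - α)*v1^2 := mul_nonneg (by linarith) (sq_nonneg v1)
  have t2 : 0 ≤ (ξ*β/2 - α)*v2^2 := mul_nonneg (by linarith) (sq_nonneg v2)
  have t3 : α*v3^2 ≤ (r/2)*v3^2 :=
    mul_le_mul_of_nonneg_right hαr (sq_nonneg v3)
  have hξΓv : ξ*(W+2*f24)*v3^2 ≤ (r/2)*v3^2 :=
    mul_le_mul_of_nonneg_right hξΓ (sq_nonneg v3)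
  nlinarith only [hξsum, t0, t1, t2, t3, hξΓv]

lemma pt_form_bounds (L1 L2 C1 C2 h13 h14 h23 h24 ξ m0 hs M0 v0 v1 v2 v3 : ℝ)
    (hL1 : 0 < L1) (hL2 : 0 < L2) (hC1 : 0 < C1) (hC2 : 0 < C2)
    (hm0 : m0 = min (min L1 L2) (min C1 C2))
    (hhs : hs = |h13|+|h14|+|h23|+|h24|)
    (hM0 : M0 = max (max L1 L2) (max C1 C2))
    (hξ : 0 < ξ) (hξP : ξ*hs ≤ m0/4) :
    (m0/4)*(v0^2+v1^2+v2^2+v3^2) ≤ L1/2*v0^2 + L2/2*v1^2 + C1/2*v2^2 + C2/2*v3^2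
        + 2*ξ*(h13*v0*v2 + h14*v0*v3 + h23*v1*v2 + h24*v1*v3)
    ∧ L1/2*v0^2 + L2/2*v1^2 + C1/2*v2^2 + C2/2*v3^2
        + 2*ξ*(h13*v0*v2 + h14*v0*v3 + h23*v1*v2 + h24*v1*v3)
      ≤ (M0/2 + ξ*hs)*(v0^2+v1^2+v2^2+v3^2) := by
  subst hhs
  have hm0L1 : m0 ≤ L1 := by rw [hm0]; exact le_trans (min_le_left _ _) (min_le_left _ _)
  have hm0L2 : m0 ≤ L2 := by rw [hm0]; exact le_trans (min_le_left _ _) (min_le_right _ _)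
  have hm0C1 : m0 ≤ C1 := by rw [hm0]; exact le_trans (min_le_right _ _) (min_le_left _ _)
  have hm0C2 : m0 ≤ C2 := by rw [hm0]; exact le_trans (min_le_right _ _) (min_le_right _ _)
  have hM0L1 : L1 ≤ M0 := by rw [hM0]; exact le_trans (le_max_left _ _) (le_max_left _ _)
  have hM0L2 : L2 ≤ M0 := by rw [hM0]; exact le_trans (le_max_right _ _) (le_max_left _ _)
  have hM0C1 : C1 ≤ M0 := by rw [hM0]; exact le_trans (le_max_left _ _) (le_max_right _ _)
  have hM0C2 : C2 ≤ M0 := by rw [hM0]; exact le_trans (le_max_right _ _) (le_max_right _ _)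
  have hΞ : ξ*(|h13|+|h14|+|h23|+|h24|)*(v0^2+v1^2+v2^2+v3^2)
      ≤ (m0/4)*(v0^2+v1^2+v2^2+v3^2) :=
    mul_le_mul_of_nonneg_right hξP (by positivity)
  have X1l := mul_le_mul_of_nonneg_left (abs_cross h13 v0 v2).1 hξ.le
  have X1u := mul_le_mul_of_nonneg_left (abs_cross h13 v0 v2).2 hξ.le
  have X2l := mul_le_mul_of_nonneg_left (abs_cross h14 v0 v3).1 hξ.le
  have X2u := mul_le_mul_of_nonneg_left (abs_cross h14 v0 v3).2 hξ.le
  have X3l := mul_le_mul_of_nonneg_left (abs_cross h23 v1 v2).1 hξ.le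
  have X3u := mul_le_mul_of_nonneg_left (abs_cross h23 v1 v2).2 hξ.le
  have X4l := mul_le_mul_of_nonneg_left (abs_cross h24 v1 v3).1 hξ.le
  have X4u := mul_le_mul_of_nonneg_left (abs_cross h24 v1 v3).2 hξ.le
  have F1 : 0 ≤ ξ * (|h13| * (v1^2+v3^2)) := by positivity
  have F2 : 0 ≤ ξ * (|h14| * (v1^2+v2^2)) := by positivity
  have F3 : 0 ≤ ξ * (|h23| * (v0^2+v3^2)) := by positivity
  have F4 : 0 ≤ ξ * (|h24| * (v0^2+v2^2)) := by positivity
  have D0 : 0 ≤ (L1 - m0)/2*v0^2 := mul_nonneg (by linarith) (sq_nonneg v0)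
  have D1 : 0 ≤ (L2 - m0)/2*v1^2 := mul_nonneg (by linarith) (sq_nonneg v1)
  have D2 : 0 ≤ (C1 - m0)/2*v2^2 := mul_nonneg (by linarith) (sq_nonneg v2)
  have D3 : 0 ≤ (C2 - m0)/2*v3^2 := mul_nonneg (by linarith) (sq_nonneg v3)
  have E0 : 0 ≤ (M0 - L1)/2*v0^2 := mul_nonneg (by linarith) (sq_nonneg v0)
  have E1 : 0 ≤ (M0 - L2)/2*v1^2 := mul_nonneg (by linarith) (sq_nonneg v1)
  have E2 : 0 ≤ (M0 - C1)/2*v2^2 := mul_nonneg (by linarith) (sq_nonneg v2)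
  have E3 : 0 ≤ (M0 - C2)/2*v3^2 := mul_nonneg (by linarith) (sq_nonneg v3)
  constructor
  · nlinarith only [hΞ, X1l, X2l, X3l, X4l, F1, F2, F3, F4, D0, D1, D2, D3]
  · nlinarith only [X1u, X2u, X3u, X4u, F1, F2, F3, F4, E0, E1, E2, E3]

lemma dot_id (B N : Matrix (Fin 4) (Fin 4) ℝ) (v : Fin 4 → ℝ) :
    (B *ᵥ v) ⬝ᵥ (N *ᵥ v) + v ⬝ᵥ (N *ᵥ (B *ᵥ v)) = v ⬝ᵥ ((Bᵀ*N + N*B) *ᵥ v) := by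
  rw [Matrix.add_mulVec, dotProduct_add]
  congr 1
  · conv_rhs => rw [← Matrix.mulVec_mulVec, Matrix.dotProduct_mulVec, Matrix.vecMul_transpose]
  · rw [← Matrix.mulVec_mulVec]

/-- existence of a common quadratic Lyapunov matrix P̃ = P + ξH with
A(μ)ᵀP̃ + P̃A(μ) ≤ -αI for all μ ∈ [-(0.5-ε), 0.5-ε], and the resulting global
uniform exponential stability of ẋ = A(μ(t))x. -/
theorem averaged_model_GUES
    (L1 L2 C1 C2 R : ℝ) (hL1 : 0 < L1) (hL2 : 0 < L2) (hC1 : 0 < C1)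
    (hC2 : 0 < C2) (hR : 0 < R)
    (P : Matrix (Fin 4) (Fin 4) ℝ) (hP : P = (1/2 : ℝ) • Matrix.diagonal ![L1, L2, C1, C2])
    (A0q E0q : Matrix (Fin 4) (Fin 4) ℝ)
    (hA0q : A0q = !![0,0,-1/2,0; 0,0,1/2,1; 1/2,-1/2,0,0; 0,-1,0,-1/R])
    (hE0q : E0q = !![0,0,1,0; 0,0,1,0; -1,-1,0,0; 0,0,0,0])
    (A : ℝ → Matrix (Fin 4) (Fin 4) ℝ)
    (hA : ∀ μ, A μ = (1/2 : ℝ) • (P⁻¹ * (A0q + μ • E0q)))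
    (ε : ℝ) (hε : 0 < ε ∧ ε ≤ 0.5)
    (h13 h14 h23 h24 : ℝ)
    (hh13 : h13 < 0)
    (hh14 : h14 = -(C2 * (h13 - h23)) / (2 * C1))
    (hh23 : h23 < (L2 / L1) * ((1 - ε) / ε) * h13 ∧ (L2 / L1) * ((1 - ε) / ε) * h13 < 0)
    (hh24 : h24 > (C2 / C1) * (((h23 - h13)^2 * (0.5 - ε)^2 + h13 * h23) / (-h13 * 4 * ε)) ∧
            (C2 / C1) * (((h23 - h13)^2 * (0.5 - ε)^2 + h13 * h23) / (-h13 * 4 * ε)) > 0)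
    (H : Matrix (Fin 4) (Fin 4) ℝ)
    (hH : H = !![0,0,h13,h14; 0,0,h23,h24; h13,h23,0,0; h14,h24,0,0]) :
    (∃ ξ > (0:ℝ), ∃ α > (0:ℝ),
      (P + ξ • H).PosDef ∧
      (∀ μ ∈ Set.Icc (-(0.5 - ε)) (0.5 - ε),
        (-( (A μ)ᵀ * (P + ξ • H) + (P + ξ • H) * A μ) - α • (1 : Matrix (Fin 4) (Fin 4) ℝ)).PosSemidef)) ∧
    (∃ K > (0:ℝ), ∃ lam > (0:ℝ),
      ∀ μ : ℝ → ℝ, Measurable μ → (∀ t, μ t ∈ Set.Icc (-(0.5 - ε)) (0.5 - ε)) →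
        ∀ x : ℝ → Fin 4 → ℝ,
          (∀ t, HasDerivAt x (A (μ t) *ᵥ x t) t) →
          ∀ t ≥ (0:ℝ), ‖x t‖ ≤ K * Real.exp (-lam * t) * ‖x 0‖) := by
  obtain ⟨hε0, hε5⟩ := hε
  have h05 : (0.5:ℝ) = 1/2 := by norm_num
  rw [h05] at hε5 hh24
  have hε2 : ε ≤ 1/2 := hε5
  have h23neg : h23 < 0 := lt_trans hh23.1 hh23.2
  have h24pos : 0 < h24 := lt_trans hh24.2 hh24.1
  -- explicit A
  have hAmu : ∀ μ, A μ = !![0,0,(μ-1/2)/L1,0; 0,0,(1/2+μ)/L2,1/L2;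
      (1/2-μ)/C1,(-1/2-μ)/C1,0,0; 0,-1/C2,0,-1/(R*C2)] := by
    have hPinv : P⁻¹ = Matrix.diagonal ![2/L1, 2/L2, 2/C1, 2/C2] := by
      apply Matrix.inv_eq_right_inv
      subst hP
      ext i j
      fin_cases i <;> fin_cases j <;>
        simp [Matrix.mul_apply, Matrix.diagonal, Fin.sum_univ_four] <;>
        field_simp
    intro μ
    rw [hA, hPinv, hA0q, hE0q]
    ext i j
    fin_cases i <;> fin_cases j
    all_goals simp [Matrix.mul_apply, Matrix.diagonal, Fin.sum_univ_four,
        Matrix.vecHead, Matrix.vecTail]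
    all_goals try field_simp
    all_goals try (first | ring | ring_nf)
    all_goals tauto
  -- explicit P + cH
  have hPt : ∀ c : ℝ, P + c • H = !![L1/2,0,c*h13,c*h14; 0,L2/2,c*h23,c*h24;
      c*h13,c*h23,C1/2,0; c*h14,c*h24,0,C2/2] := by
    intro c
    rw [hP, hH]
    ext i j
    fin_cases i <;> fin_cases j <;>
      simp [Matrix.diagonal, Matrix.vecHead, Matrix.vecTail] <;> ring
  -- atoms
  have hC1' := hC1.ne'
  have hC2' := hC2.ne'
  have hL1' := hL1.ne'
  have hL2' := hL2.ne'
  have hR' := hR.ne'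
  have h13ne : h13 ≠ 0 := hh13.ne
  have hεne : ε ≠ 0 := hε0.ne'
  obtain ⟨a13, ha13d⟩ : ∃ x:ℝ, x = -h13/C1 := ⟨_, rfl⟩
  obtain ⟨a23, ha23d⟩ : ∃ x:ℝ, x = -h23/C1 := ⟨_, rfl⟩
  obtain ⟨b24, hb24d⟩ : ∃ x:ℝ, x = h24/C2 := ⟨_, rfl⟩
  obtain ⟨c13, hc13d⟩ : ∃ x:ℝ, x = -h13/L1 := ⟨_, rfl⟩
  obtain ⟨d23, hd23d⟩ : ∃ x:ℝ, x = -h23/L2 := ⟨_, rfl⟩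
  obtain ⟨e14, he14d⟩ : ∃ x:ℝ, x = h14/L1 := ⟨_, rfl⟩
  obtain ⟨f24, hf24d⟩ : ∃ x:ℝ, x = h24/L2 := ⟨_, rfl⟩
  obtain ⟨g14, hg14d⟩ : ∃ x:ℝ, x = h14/C2 := ⟨_, rfl⟩
  obtain ⟨r, hrd⟩ : ∃ x:ℝ, x = 1/R := ⟨_, rfl⟩
  have ha13 : 0 < a13 := by rw [ha13d]; exact div_pos (by linarith) hC1
  have ha23 : 0 < a23 := by rw [ha23d]; exact div_pos (by linarith) hC1
  have hb24 : 0 < b24 := by rw [hb24d]; exact div_pos h24pos hC2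
  have hc13 : 0 < c13 := by rw [hc13d]; exact div_pos (by linarith) hL1
  have hd23 : 0 < d23 := by rw [hd23d]; exact div_pos (by linarith) hL2
  have hf24 : 0 < f24 := by rw [hf24d]; exact div_pos h24pos hL2
  have hr : 0 < r := by rw [hrd]; positivity
  -- conversion: hcd
  have hcd : (1-ε)*c13 < ε*d23 := by
    have step := mul_lt_mul_of_pos_right hh23.1 (show (0:ℝ) < ε*L1 by positivity)
    have erw : (L2/L1)*((1-ε)/ε)*h13*(ε*L1) = L2*((1-ε)*h13) := by
      field_simp
    rw [erw] at step
    rw [hc13d, hd23d]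
    have e1 : (1-ε)*(-h13/L1) = ((1-ε)*(-h13))/L1 := by ring
    have e2 : ε*(-h23/L2) = (ε*(-h23))/L2 := by ring
    rw [e1, e2, div_lt_div_iff₀ hL1 hL2]
    nlinarith only [step]
  -- conversion: hdet0
  have hdet0 : (a13-a23)^2*(1/2-ε)^2 + a13*a23 < 4*a13*ε*b24 := by
    have hmul : (0:ℝ) < 4*a13*ε := by positivity
    have hTlt := mul_lt_mul_of_pos_right hh24.1 (show (0:ℝ) < 1/C2 by positivity)
    have hid : 4*a13*ε*(((C2/C1) * (((h23 - h13)^2 * (1/2 - ε)^2 + h13 * h23)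
          / (-h13 * 4 * ε)))*(1/C2)) = (a13-a23)^2*(1/2-ε)^2 + a13*a23 := by
      rw [ha13d, ha23d]; field_simp; ring
    have hb24' : b24 = h24*(1/C2) := by rw [hb24d]; ring
    calc (a13-a23)^2*(1/2-ε)^2 + a13*a23
        = 4*a13*ε*(((C2/C1) * (((h23 - h13)^2 * (1/2 - ε)^2 + h13 * h23)
          / (-h13 * 4 * ε)))*(1/C2)) := hid.symm
      _ < 4*a13*ε*(h24*(1/C2)) := mul_lt_mul_of_pos_left hTlt hmul
      _ = 4*a13*ε*b24 := by rw [hb24']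
  -- constants
  obtain ⟨β1, hβ1⟩ : ∃ x:ℝ, x = 2*a13*ε := ⟨_, rfl⟩
  obtain ⟨M1, hM1⟩ : ∃ x:ℝ, x = 2*a13*(1-ε) := ⟨_, rfl⟩
  obtain ⟨M2, hM2⟩ : ∃ x:ℝ, x = 2*a23*(1-ε)+2*b24 := ⟨_, rfl⟩
  obtain ⟨d0, hd0⟩ : ∃ x:ℝ, x = 4*a13*ε*b24 - a13*a23 - (a13-a23)^2*(1/2-ε)^2 := ⟨_, rfl⟩
  obtain ⟨β2, hβ2⟩ : ∃ x:ℝ, x = min (β1/2) (d0/(2*(M1+M2))) := ⟨_, rfl⟩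
  obtain ⟨β3, hβ3⟩ : ∃ x:ℝ, x = 2*(d23*ε - c13*(1-ε)) := ⟨_, rfl⟩
  obtain ⟨β, hβd⟩ : ∃ x:ℝ, x = min β2 β3 := ⟨_, rfl⟩
  obtain ⟨M34, hM34⟩ : ∃ x:ℝ, x = d23 + |e14| + f24 := ⟨_, rfl⟩
  obtain ⟨W, hW⟩ : ∃ x:ℝ, x = (2/β)*((g14*r)^2 + (b24*r)^2 + M34^2) := ⟨_, rfl⟩
  obtain ⟨m0, hm0⟩ : ∃ x:ℝ, x = min (min L1 L2) (min C1 C2) := ⟨_, rfl⟩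
  obtain ⟨hsv, hhs⟩ : ∃ x:ℝ, x = |h13|+|h14|+|h23|+|h24| := ⟨_, rfl⟩
  obtain ⟨M0, hM0⟩ : ∃ x:ℝ, x = max (max L1 L2) (max C1 C2) := ⟨_, rfl⟩
  -- positivity of constants
  have hβ1pos : 0 < β1 := by rw [hβ1]; positivity
  have hM1pos : 0 < M1 := by rw [hM1]; nlinarith only [ha13, hε0, hε2]
  have hM2pos : 0 < M2 := by rw [hM2]; nlinarith only [ha23, hb24, hε0, hε2]
  have hd0pos : 0 < d0 := by rw [hd0]; nlinarith only [hdet0]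
  have hβ2pos : 0 < β2 := by rw [hβ2]; exact lt_min (by positivity) (by positivity)
  have hβ3pos : 0 < β3 := by rw [hβ3]; nlinarith only [hcd]
  have hβpos : 0 < β := by rw [hβd]; exact lt_min hβ2pos hβ3pos
  have hWpos : 0 ≤ W := by rw [hW]; positivity
  have hΓpos : 0 < W + 2*f24 := by nlinarith only [hWpos, hf24]
  have hm0pos : 0 < m0 := by
    rw [hm0]; exact lt_min (lt_min hL1 hL2) (lt_min hC1 hC2)
  have hhsnn : 0 ≤ hsv := by
    rw [hhs]; positivity
  have hM0pos : 0 < M0 := by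
    rw [hM0]; exact lt_of_lt_of_le hL1 (le_trans (le_max_left _ _) (le_max_left _ _))
  -- choose ξ and α
  obtain ⟨ξ, hξd⟩ : ∃ x:ℝ, x = min (m0/(4*hsv+1)) ((r/2)/(W + 2*f24)) := ⟨_, rfl⟩
  have hξpos : 0 < ξ := by rw [hξd]; exact lt_min (by positivity) (by positivity)
  have hξP : ξ*hsv ≤ m0/4 := by
    have h1 : ξ ≤ m0/(4*hsv+1) := by rw [hξd]; exact min_le_left _ _
    have h2 : ξ*hsv ≤ (m0/(4*hsv+1))*hsv := mul_le_mul_of_nonneg_right h1 hhsnn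
    have h3 : (m0/(4*hsv+1))*hsv ≤ m0/4 := by
      rw [div_mul_eq_mul_div, div_le_div_iff₀ (by positivity) (by norm_num)]
      nlinarith only [hm0pos, hhsnn]
    linarith
  have hξΓ : ξ*(W + 2*f24) ≤ r/2 := by
    have h1 : ξ ≤ (r/2)/(W + 2*f24) := by rw [hξd]; exact min_le_right _ _
    calc ξ*(W + 2*f24) ≤ ((r/2)/(W + 2*f24))*(W + 2*f24) :=
          mul_le_mul_of_nonneg_right h1 hΓpos.le
    _ = r/2 := div_mul_cancel₀ _ hΓpos.ne'
  obtain ⟨α, hαd⟩ : ∃ x:ℝ, x = min (ξ*β/2) (r/2) := ⟨_, rfl⟩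
  have hαpos : 0 < α := by rw [hαd]; exact lt_min (by positivity) (by positivity)
  have hαβ : α ≤ ξ*β/2 := by rw [hαd]; exact min_le_left _ _
  have hαr : α ≤ r/2 := by rw [hαd]; exact min_le_right _ _
  -- quadratic form of P + ξ•H
  have hPtq : ∀ v : Fin 4 → ℝ, v ⬝ᵥ ((P + ξ • H) *ᵥ v)
      = L1/2*(v 0)^2 + L2/2*(v 1)^2 + C1/2*(v 2)^2 + C2/2*(v 3)^2
        + 2*ξ*(h13*(v 0)*(v 2) + h14*(v 0)*(v 3) + h23*(v 1)*(v 2) + h24*(v 1)*(v 3)) := by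
    intro v
    rw [hPt ξ]
    simp only [dotProduct, Matrix.mulVec, Fin.sum_univ_four]
    norm_num [Matrix.cons_val_zero, Matrix.cons_val_one, Matrix.head_cons,
      Matrix.cons_val_two, Matrix.cons_val_three, Matrix.tail_cons, Matrix.head_fin_const,
      Matrix.vecHead, Matrix.vecTail, Function.comp]
    ring
  -- main quadratic form identity
  have hQF : ∀ μ, ∀ v : Fin 4 → ℝ,
      v ⬝ᵥ (((A μ)ᵀ * (P + ξ • H) + (P + ξ • H) * (A μ)) *ᵥ v)
      = -(1/R)*(v 3)^2 + ξ*( (2*h13*(1/2-μ)/C1) * (v 0)^2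
        + 2*((h23*(1/2-μ) - h13*(1/2+μ))/C1 - h14/C2) * (v 0) * (v 1)
        + (-2*h23*(1/2+μ)/C1 - 2*h24/C2) * (v 1)^2
        + (2*(h13*(μ-1/2)/L1 + h23*(μ+1/2)/L2)) * (v 2)^2
        + 2*(-h14/(C2*R)) * (v 0) * (v 3)
        + 2*(-h24/(C2*R)) * (v 1) * (v 3)
        + 2*(h23/L2 + h14*(μ-1/2)/L1 + h24*(μ+1/2)/L2) * (v 2) * (v 3)
        + (2*h24/L2) * (v 3)^2 ) := by
    intro μ v
    rw [hAmu μ, hPt ξ]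
    simp only [dotProduct, Matrix.mulVec, Matrix.mul_apply, Matrix.add_apply,
      Matrix.transpose_apply, Fin.sum_univ_four]
    norm_num [Matrix.cons_val_zero, Matrix.cons_val_one, Matrix.head_cons,
      Matrix.cons_val_two, Matrix.cons_val_three, Matrix.tail_cons, Matrix.head_fin_const,
      Matrix.vecHead, Matrix.vecTail, Function.comp]
    field_simp
    ring
  -- the key inequality
  have hkey : ∀ μ ∈ Set.Icc (-(0.5 - ε)) (0.5 - ε), ∀ v : Fin 4 → ℝ,
      v ⬝ᵥ (((A μ)ᵀ * (P + ξ • H) + (P + ξ • H) * (A μ)) *ᵥ v) ≤ -α * (v ⬝ᵥ v) := by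
    intro μ hμ v
    rw [Set.mem_Icc, h05] at hμ
    obtain ⟨hμ1', hμ2'⟩ := hμ
    have hμ1 : ε - 1/2 ≤ μ := by linarith
    have hμ2 : μ ≤ 1/2 - ε := hμ2'
    have hvv : v ⬝ᵥ v = (v 0)^2+(v 1)^2+(v 2)^2+(v 3)^2 := by
      simp [dotProduct, Fin.sum_univ_four]; ring
    rw [hQF μ v, hvv]
    have hcore := core_scalar ε a13 a23 b24 c13 d23 e14 f24 g14 r ξ α μ
      (v 0) (v 1) (v 2) (v 3) β1 M1 M2 d0 β2 β3 β M34 W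
      (2*h13*(1/2-μ)/C1)
      ((h23*(1/2-μ) - h13*(1/2+μ))/C1 - h14/C2)
      (-2*h23*(1/2+μ)/C1 - 2*h24/C2)
      (2*(h13*(μ-1/2)/L1 + h23*(μ+1/2)/L2))
      (h23/L2 + h14*(μ-1/2)/L1 + h24*(μ+1/2)/L2)
      (-h14/(C2*R)) (-h24/(C2*R)) (2*h24/L2)
      hε0 hε2 ha13 ha23 hb24 hc13 hd23 hf24 hr hcd hdet0 hμ1 hμ2
      hβ1 hM1 hM2 hd0 hβ2 hβ3 hβd hM34 hW hξpos hξΓ hαpos hαβ hαr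
      (by rw [ha13d]; ring)
      (by rw [ha13d, ha23d, hh14]; field_simp; ring)
      (by rw [ha23d, hb24d]; ring)
      (by rw [hc13d, hd23d]; ring)
      (by rw [hd23d, he14d, hf24d]; ring)
      (by rw [hg14d, hrd]; ring)
      (by rw [hb24d, hrd]; ring)
      (by rw [hf24d]; ring)
    have hrR : r = 1/R := hrd
    nlinarith only [hcore, hrR]
  constructor
  · -- Part 1
    refine ⟨ξ, hξpos, α, hαpos, ?_, ?_⟩
    · -- PosDef
      rw [Matrix.posDef_iff_dotProduct_mulVec]
      constructor
      · rw [hPt ξ]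
        ext i j
        fin_cases i <;> fin_cases j <;>
          simp [Matrix.conjTranspose_apply, Matrix.vecHead, Matrix.vecTail]
      · intro v hv
        have hsv' : star v = v := by
          funext i; simp
        rw [hsv', hPtq v]
        have hlow := (pt_form_bounds L1 L2 C1 C2 h13 h14 h23 h24 ξ m0 hsv M0
          (v 0) (v 1) (v 2) (v 3) hL1 hL2 hC1 hC2 hm0 hhs hM0 hξpos hξP).1
        have hvpos : 0 < (v 0)^2+(v 1)^2+(v 2)^2+(v 3)^2 := by
          obtain ⟨i, hi⟩ := Function.ne_iff.mp hv
          have h8 : (0:ℝ) < (v i)^2 :=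
            lt_of_le_of_ne (sq_nonneg _) (Ne.symm (pow_ne_zero 2 hi))
          have h9 : (v i)^2 ≤ (v 0)^2+(v 1)^2+(v 2)^2+(v 3)^2 := by
            fin_cases i <;> simp <;>
              nlinarith only [sq_nonneg (v 0), sq_nonneg (v 1), sq_nonneg (v 2), sq_nonneg (v 3)]
          linarith
        nlinarith only [hlow, hvpos, hm0pos]
    · -- PosSemidef
      intro μ hμ
      have hPtT : (P + ξ • H)ᵀ = P + ξ • H := by
        rw [hPt ξ]
        ext i j
        fin_cases i <;> fin_cases j <;>
          simp [Matrix.vecHead, Matrix.vecTail]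
      rw [Matrix.posSemidef_iff_dotProduct_mulVec]
      constructor
      · have h1 : ((A μ)ᵀ * (P + ξ • H) + (P + ξ • H) * (A μ))ᵀ
            = (A μ)ᵀ * (P + ξ • H) + (P + ξ • H) * (A μ) := by
          rw [Matrix.transpose_add, Matrix.transpose_mul, Matrix.transpose_mul,
            Matrix.transpose_transpose, hPtT, add_comm]
        have h2 : ∀ (N : Matrix (Fin 4) (Fin 4) ℝ), Nᴴ = Nᵀ := fun N => by
          ext i j; simp [Matrix.conjTranspose_apply]
        show _ = _
        rw [h2, Matrix.transpose_sub, Matrix.transpose_neg, h1,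
          Matrix.transpose_smul, Matrix.transpose_one]
      · intro v
        have hsv' : star v = v := by funext i; simp
        rw [hsv']
        have hk := hkey μ hμ v
        have hexp : v ⬝ᵥ ((-( (A μ)ᵀ * (P + ξ • H) + (P + ξ • H) * A μ)
              - α • (1 : Matrix (Fin 4) (Fin 4) ℝ)) *ᵥ v)
            = -(v ⬝ᵥ (((A μ)ᵀ * (P + ξ • H) + (P + ξ • H) * (A μ)) *ᵥ v))
              - α * (v ⬝ᵥ v) := by
          rw [Matrix.sub_mulVec, Matrix.neg_mulVec, Matrix.smul_mulVec,
            Matrix.one_mulVec, dotProduct_sub, dotProduct_neg,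
            dotProduct_smul, smul_eq_mul]
        rw [hexp]
        nlinarith only [hk]
  · -- Part 2
    apply gues_aux (P + ξ • H) A (Set.Icc (-(0.5 - ε)) (0.5 - ε))
      (m0/4) (M0/2 + ξ*hsv) α (by positivity)
      (by positivity) hαpos
    · intro v
      rw [hPtq v]
      have hlow := (pt_form_bounds L1 L2 C1 C2 h13 h14 h23 h24 ξ m0 hsv M0
        (v 0) (v 1) (v 2) (v 3) hL1 hL2 hC1 hC2 hm0 hhs hM0 hξpos hξP).1
      have hvv : v ⬝ᵥ v = (v 0)^2+(v 1)^2+(v 2)^2+(v 3)^2 := by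
        simp [dotProduct, Fin.sum_univ_four]; ring
      rw [hvv]
      linarith
    · intro v
      rw [hPtq v]
      have hhigh := (pt_form_bounds L1 L2 C1 C2 h13 h14 h23 h24 ξ m0 hsv M0
        (v 0) (v 1) (v 2) (v 3) hL1 hL2 hC1 hC2 hm0 hhs hM0 hξpos hξP).2
      have hvv : v ⬝ᵥ v = (v 0)^2+(v 1)^2+(v 2)^2+(v 3)^2 := by
        simp [dotProduct, Fin.sum_univ_four]; ring
      rw [hvv]
      linarith
    · intro μ hμ v
      have hid := dot_id (A μ) (P + ξ • H) v
      rw [hid]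
      exact hkey μ hμ v
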